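/- Saving works: let S be the set of indices j that occur as n−1−low(C_{i}) (0-based) for nonzero columns C_i of the reduced coboundary matrix; then S is exactly the set of negative simplices, and the twist reduction of the matrix B' obtained from the boundary matrix B by zeroing all columns outside S equals the twist reduction of B. -/

import Mathlib

/-- Left-to-right column addition over ℤ/2: add column `i` to column `j`. -/
def colAdd {n : ℕ} (M : Matrix (Fin n) (Fin n) (ZMod 2)) (i j : Fin n) :
    Matrix (Fin n) (Fin n) (ZMod 2) :=
  fun r c => if c = j then M r j + M r i else M r c

/-- One step of left-to-right column reduction: add some column `i` to a
later column `j`. -/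
def Step {n : ℕ} (M N : Matrix (Fin n) (Fin n) (ZMod 2)) : Prop :=
  ∃ i j : Fin n, i < j ∧ N = colAdd M i j

/-- `R` is obtained from `M` by a finite sequence of left-to-right column
additions. -/
def Reduces {n : ℕ} (M R : Matrix (Fin n) (Fin n) (ZMod 2)) : Prop :=
  Relation.ReflTransGen Step M R

/-- `i` is the lowest one (largest row index of a nonzero entry) of
column `j` of `R`. -/
def IsLow {n : ℕ} (R : Matrix (Fin n) (Fin n) (ZMod 2)) (i j : Fin n) : Prop :=
  R i j ≠ 0 ∧ ∀ r, R r j ≠ 0 → r ≤ i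

/-- A matrix is reduced if distinct nonzero columns have distinct lowest ones. -/
def Reduced {n : ℕ} (R : Matrix (Fin n) (Fin n) (ZMod 2)) : Prop :=
  ∀ i j j', IsLow R i j → IsLow R i j' → j = j'

/-- The ℤ/2 boundary matrix of a sequence of simplices `σ`:
entry (i,j) is 1 iff `σ i` is a codimension-1 face of `σ j`. -/
def bmat {V : Type} [DecidableEq V] {n : ℕ} (σ : Fin n → Finset V) :
    Matrix (Fin n) (Fin n) (ZMod 2) :=
  fun i j => if σ i ⊆ σ j ∧ (σ i).card + 1 = (σ j).card then 1 else 0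


/-- (i, j) is a persistence pair of `M`. -/
def PersPair {n : ℕ} (M : Matrix (Fin n) (Fin n) (ZMod 2)) (i j : Fin n) : Prop :=
  ∃ R, Reduces M R ∧ Reduced R ∧ IsLow R i j

/-- The anti-transpose (coboundary matrix, when applied to a boundary matrix). -/
def antiTranspose {n : ℕ} (M : Matrix (Fin n) (Fin n) (ZMod 2)) :
    Matrix (Fin n) (Fin n) (ZMod 2) :=
  fun i j => M j.rev i.rev

/-- Twist-style reduction: `R` is reduced and is obtained from `M` by
left-to-right column additions in which only already fully reduced columns
(columns that already agree with their final value in `R`) are added to later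
columns — as in the twist algorithm with clearing. -/
def FinalReduces {n : ℕ} (M R : Matrix (Fin n) (Fin n) (ZMod 2)) : Prop :=
  Reduced R ∧
    Relation.ReflTransGen
      (fun A A' => ∃ i j : Fin n, i < j ∧ (∀ r, A r i = R r i) ∧ A' = colAdd A i j) M R

-- auxiliary definitions
abbrev Mat (n : ℕ) := Matrix (Fin n) (Fin n) (ZMod 2)

lemma z2_cases : ∀ x : ZMod 2, x = 0 ∨ x = 1 := by decide
lemma z2_one {x : ZMod 2} (h : x ≠ 0) : x = 1 := by revert h; revert x; decide
lemma z2_self (x : ZMod 2) : x + x = 0 := by revert x; decide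
lemma z2_eq {a b : ZMod 2} (h : a + b = 0) : b = a := by revert h; revert a b; decide

namespace Saving

variable {n : ℕ}

/-- low of a vector -/
def IsLowV (v : Fin n → ZMod 2) (i : Fin n) : Prop :=
  v i ≠ 0 ∧ ∀ r, v r ≠ 0 → r ≤ i

/-- high (leftmost nonzero) of a vector -/
def IsHighV (v : Fin n → ZMod 2) (c : Fin n) : Prop :=
  v c ≠ 0 ∧ ∀ c', v c' ≠ 0 → c ≤ c'

lemma isLow_iff (R : Mat n) (i j : Fin n) : IsLow R i j ↔ IsLowV (fun r => R r j) i := Iff.rfl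

lemma isLowV_unique {v : Fin n → ZMod 2} {i i'} (h : IsLowV v i) (h' : IsLowV v i') : i = i' :=
  le_antisymm (h'.2 i h.1) (h.2 i' h'.1)

lemma exists_isLowV {v : Fin n → ZMod 2} (h : ∃ r, v r ≠ 0) : ∃ i, IsLowV v i := by
  classical
  obtain ⟨r0, hr0⟩ := h
  obtain ⟨b, hb, hmax⟩ := Finset.exists_max_image (Finset.univ.filter (fun r => v r ≠ 0)) id
    ⟨r0, by simpa using hr0⟩
  refine ⟨b, by simpa using (Finset.mem_filter.mp hb).2, fun r hr => ?_⟩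
  exact hmax r (by simpa using hr)

lemma colAdd_colAdd (M : Mat n) {i j : Fin n} (h : i ≠ j) : colAdd (colAdd M i j) i j = M := by
  funext r c
  by_cases hc : c = j
  · subst hc
    simp only [colAdd, if_neg h, eq_self_iff_true, if_true]
    rw [add_assoc, z2_self, add_zero]
  · simp [colAdd, hc]

lemma step_symm {M N : Mat n} (h : Step M N) : Step N M := by
  obtain ⟨i, j, hij, rfl⟩ := h
  exact ⟨i, j, hij, (colAdd_colAdd M hij.ne).symm⟩

lemma reduces_symm {M N : Mat n} (h : Reduces M N) : Reduces N M :=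
  @Std.Symm.symm _ _ (@Relation.ReflTransGen.stdSymm _ _ ⟨fun _ _ h => step_symm h⟩) _ _ h

lemma reduces_trans {M N P : Mat n} (h : Reduces M N) (h' : Reduces N P) : Reduces M P :=
  Relation.ReflTransGen.trans h h'

/-- key sum-transformation under a column addition -/
lemma lin_colAdd (M : Mat n) (i0 j0 : Fin n) (d : Fin n → ZMod 2) (r : Fin n) :
    ∑ b, d b * (colAdd M i0 j0) r b = ∑ b, (if b = i0 then d b + d j0 else d b) * M r b := by
  have h1 : ∀ b : Fin n, d b * colAdd M i0 j0 r b
      = d b * M r b + (if b = j0 then d j0 * M r i0 else 0) := by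
    intro b
    by_cases hb : b = j0
    · subst hb; simp [colAdd, mul_add]
    · simp [colAdd, hb]
  have h2 : ∀ b : Fin n, (if b = i0 then d b + d j0 else d b) * M r b
      = d b * M r b + (if b = i0 then d j0 * M r i0 else 0) := by
    intro b
    by_cases hb : b = i0
    · subst hb; simp [add_mul]
    · simp [hb]
  rw [Finset.sum_congr rfl (fun b _ => h1 b), Finset.sum_congr rfl (fun b _ => h2 b),
    Finset.sum_add_distrib, Finset.sum_add_distrib]
  congr 1
  simp

/-- coset of column j : column j plus span of strictly earlier columns, via coefficient
vectors with `d j = 1`, support `≤ j`. -/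
def CosetD (M : Mat n) (j : Fin n) (v : Fin n → ZMod 2) : Prop :=
  ∃ d : Fin n → ZMod 2, d j = 1 ∧ (∀ b, ¬ b ≤ j → d b = 0) ∧ ∀ r, v r = ∑ b, d b * M r b

/-- span of columns strictly before j -/
def SpanD (M : Mat n) (j : Fin n) (v : Fin n → ZMod 2) : Prop :=
  ∃ d : Fin n → ZMod 2, (∀ b, ¬ b < j → d b = 0) ∧ ∀ r, v r = ∑ b, d b * M r b

lemma cosetD_step {M N : Mat n} (h : Step M N) {j v} (hv : CosetD N j v) : CosetD M j v := by
  obtain ⟨i0, j0, hij, rfl⟩ := h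
  obtain ⟨d, hdj, hsupp, hrep⟩ := hv
  refine ⟨fun b => if b = i0 then d b + d j0 else d b, ?_, ?_, ?_⟩
  · by_cases hj : j = i0
    · subst hj
      have : d j0 = 0 := hsupp j0 (fun hle => absurd (lt_of_lt_of_le hij hle) (lt_irrefl _))
      simp [this, hdj]
    · simp [hj, hdj]
  · intro b hb
    by_cases hbi : b = i0
    · subst hbi
      have h1 : d b = 0 := hsupp b hb
      have h2 : d j0 = 0 := hsupp j0 (fun hle => hb (le_trans hij.le hle))
      simp [h1, h2]
    · simp [hbi, hsupp b hb]
  · intro r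
    rw [hrep r, lin_colAdd]

lemma spanD_step {M N : Mat n} (h : Step M N) {j v} (hv : SpanD N j v) : SpanD M j v := by
  obtain ⟨i0, j0, hij, rfl⟩ := h
  obtain ⟨d, hsupp, hrep⟩ := hv
  refine ⟨fun b => if b = i0 then d b + d j0 else d b, ?_, ?_⟩
  · intro b hb
    by_cases hbi : b = i0
    · subst hbi
      have h1 : d b = 0 := hsupp b hb
      have h2 : d j0 = 0 := hsupp j0 (fun hlt => hb (lt_trans hij hlt))
      simp [h1, h2]
    · simp [hbi, hsupp b hb]
  · intro r
    rw [hrep r, lin_colAdd]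

lemma cosetD_reduces {M N : Mat n} (h : Reduces M N) (j : Fin n) (v : Fin n → ZMod 2) :
    CosetD M j v ↔ CosetD N j v := by
  induction h with
  | refl => rfl
  | tail _ hstep ih =>
    rw [ih]
    exact ⟨fun hv => cosetD_step (step_symm hstep) hv, fun hv => cosetD_step hstep hv⟩

lemma spanD_reduces {M N : Mat n} (h : Reduces M N) (j : Fin n) (v : Fin n → ZMod 2) :
    SpanD M j v ↔ SpanD N j v := by
  induction h with
  | refl => rfl
  | tail _ hstep ih =>
    rw [ih]
    exact ⟨fun hv => spanD_step (step_symm hstep) hv, fun hv => spanD_step hstep hv⟩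

/-- drop zero coefficients and zero columns from a representation -/
lemma rep_T {M : Mat n} {d : Fin n → ZMod 2} {v : Fin n → ZMod 2}
    (hv : ∀ r, v r = ∑ b, d b * M r b) :
    ∀ r, v r = ∑ b ∈ Finset.univ.filter (fun b => d b ≠ 0 ∧ ∃ r', M r' b ≠ 0), M r b := by
  classical
  intro r
  rw [hv r, Finset.sum_filter]
  apply Finset.sum_congr rfl
  intro b _
  by_cases hb : d b ≠ 0 ∧ ∃ r', M r' b ≠ 0
  · rw [if_pos hb, z2_one hb.1, one_mul]
  · rw [if_neg hb]
    push_neg at hb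
    by_cases hd : d b = 0
    · rw [hd, zero_mul]
    · rw [hb hd r, mul_zero]

/-- the low of a sum of distinct nonzero columns of a reduced matrix is the max of the lows -/
lemma sumlow {R : Mat n} (hred : Reduced R) {T : Finset (Fin n)} (hne : T.Nonempty)
    (hT : ∀ x ∈ T, ∃ r, R r x ≠ 0) {v : Fin n → ZMod 2}
    (hv : ∀ r, v r = ∑ x ∈ T, R r x) :
    ∃ x ∈ T, ∃ ℓ, IsLow R ℓ x ∧ IsLowV v ℓ ∧ ∀ x' ∈ T, ∀ l', IsLow R l' x' → l' ≤ ℓ := by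
  classical
  have hlow : ∀ x ∈ T, ∃ l, IsLow R l x := by
    intro x hx
    exact exists_isLowV (hT x hx)
  set f : Fin n → Fin n := fun x => if h : ∃ l, IsLowV (fun r => R r x) l then h.choose else x
    with hf
  have hfl : ∀ x ∈ T, IsLow R (f x) x := by
    intro x hx
    obtain ⟨l, hl⟩ := hlow x hx
    rw [hf]
    dsimp only
    rw [dif_pos ⟨l, hl⟩]
    exact Exists.choose_spec (p := fun l => IsLowV (fun r => R r x) l) ⟨l, hl⟩
  obtain ⟨x0, hx0, hmax⟩ := Finset.exists_max_image T f hne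
  refine ⟨x0, hx0, f x0, hfl x0 hx0, ⟨?_, ?_⟩, ?_⟩
  · rw [hv]
    rw [Finset.sum_eq_single_of_mem x0 hx0]
    · exact (hfl x0 hx0).1
    · intro x hx hxne
      by_contra hnz
      have h1 : f x0 ≤ f x := (hfl x hx).2 _ hnz
      have h2 : f x = f x0 := le_antisymm (hmax x hx) h1
      exact hxne (hred (f x0) x x0 (h2 ▸ hfl x hx) (hfl x0 hx0))
  · intro r hr
    rw [hv] at hr
    obtain ⟨x, hx, hnz⟩ : ∃ x ∈ T, R r x ≠ 0 := by
      by_contra hc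
      push_neg at hc
      exact hr (Finset.sum_eq_zero hc)
    exact le_trans ((hfl x hx).2 r hnz) (hmax x hx)
  · intro x hx l' hl'
    have : l' = f x := isLowV_unique (v := fun r => R r x) hl' (hfl x hx)
    exact this ▸ hmax x hx

/-- the column-side abstract pairing predicate -/
def ColPred (M : Mat n) (a b : Fin n) : Prop :=
  (¬ CosetD M b 0) ∧ (∃ v, CosetD M b v ∧ IsLowV v a) ∧
    (∀ v a', CosetD M b v → IsLowV v a' → a ≤ a')

lemma cosetD_to_T {M : Mat n} {b v} (h : CosetD M b v) :
    ∃ T : Finset (Fin n), (∀ x ∈ T, x ≤ b) ∧ (∀ x ∈ T, ∃ r, M r x ≠ 0) ∧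
      ((∃ r, M r b ≠ 0) → b ∈ T) ∧ ∀ r, v r = ∑ x ∈ T, M r x := by
  classical
  obtain ⟨d, hdb, hsupp, hrep⟩ := h
  refine ⟨Finset.univ.filter (fun x => d x ≠ 0 ∧ ∃ r', M r' x ≠ 0), ?_, ?_, ?_, rep_T hrep⟩
  · intro x hx
    by_contra hc
    exact (Finset.mem_filter.mp hx).2.1 (hsupp x hc)
  · intro x hx
    exact (Finset.mem_filter.mp hx).2.2
  · intro hb
    simp only [Finset.mem_filter, Finset.mem_univ, true_and]
    exact ⟨by rw [hdb]; exact one_ne_zero, hb⟩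

lemma cosetD_self (M : Mat n) (b : Fin n) : CosetD M b (fun r => M r b) := by
  classical
  refine ⟨fun x => if x = b then 1 else 0, by simp, ?_, ?_⟩
  · intro x hx
    dsimp only
    rw [if_neg]
    rintro rfl
    exact hx le_rfl
  · intro r
    simp [ite_mul, Finset.sum_ite_eq']

lemma colPred_iff_isLow {R : Mat n} (hred : Reduced R) (a b : Fin n) :
    ColPred R a b ↔ IsLow R a b := by
  constructor
  · rintro ⟨h0, ⟨v, hv, hva⟩, hmin⟩
    have hcolnz : ∃ r, R r b ≠ 0 := by
      by_contra hc
      push_neg at hc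
      apply h0
      obtain ⟨d, h1, h2, h3⟩ := cosetD_self R b
      refine ⟨d, h1, h2, fun r => ?_⟩
      have h4 := h3 r
      dsimp only at h4
      rw [Pi.zero_apply, ← h4, hc r]
    obtain ⟨a', ha'⟩ := exists_isLowV hcolnz
    have hlow : IsLow R a' b := ha'
    -- show a = a'
    have h1 : a ≤ a' := hmin _ a' (cosetD_self R b) ha'
    -- other direction : a' ≤ a from min property of a' pairing
    have h2 : a' ≤ a := by
      -- from the witness v : low of v is max of lows of participating columns, ≥ a'
      obtain ⟨T, hTle, hTnz, hTb, hTrep⟩ := cosetD_to_T hv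
      have hbT : b ∈ T := hTb hcolnz
      obtain ⟨x0, hx0, ℓ, hℓx, hℓv, hmax⟩ := sumlow hred ⟨b, hbT⟩ hTnz hTrep
      have : a = ℓ := isLowV_unique hva hℓv
      subst this
      exact hmax b hbT a' hlow
    exact le_antisymm h2 h1 ▸ hlow
  · intro h
    have hcolnz : ∃ r, R r b ≠ 0 := ⟨a, h.1⟩
    refine ⟨?_, ⟨fun r => R r b, cosetD_self R b, h⟩, ?_⟩
    · intro h0
      obtain ⟨T, hTle, hTnz, hTb, hTrep⟩ := cosetD_to_T h0
      obtain ⟨x0, hx0, ℓ, hℓx, hℓv, hmax⟩ := sumlow hred ⟨b, hTb hcolnz⟩ hTnz hTrep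
      exact hℓv.1 rfl
    · intro v a' hv hva'
      obtain ⟨T, hTle, hTnz, hTb, hTrep⟩ := cosetD_to_T hv
      obtain ⟨x0, hx0, ℓ, hℓx, hℓv, hmax⟩ := sumlow hred ⟨b, hTb hcolnz⟩ hTnz hTrep
      have : a' = ℓ := isLowV_unique hva' hℓv
      subst this
      exact hmax b (hTb hcolnz) a h

lemma colPred_reduces {M N : Mat n} (h : Reduces M N) (a b : Fin n) :
    ColPred M a b ↔ ColPred N a b := by
  unfold ColPred
  simp only [cosetD_reduces h]

/-- pers pair iff ColPred, modulo existence of a reduced reduction -/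
lemma persPair_of_colPred {M R0 : Mat n} (hR0 : Reduces M R0) (hR0red : Reduced R0)
    {a b : Fin n} :
    ColPred M a b ↔ PersPair M a b := by
  constructor
  · intro h
    exact ⟨R0, hR0, hR0red, (colPred_iff_isLow hR0red a b).mp ((colPred_reduces hR0 a b).mp h)⟩
  · rintro ⟨R, hR, hred, hlow⟩
    exact (colPred_reduces hR a b).mpr ((colPred_iff_isLow hred a b).mpr hlow)

/-! ## Row-side machinery -/

/-- row coset: row p plus combinations of strictly later rows -/
def RowCosetD (M : Mat n) (p : Fin n) (w : Fin n → ZMod 2) : Prop :=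
  ∃ μ : Fin n → ZMod 2, μ p = 1 ∧ (∀ s, ¬ p ≤ s → μ s = 0) ∧ ∀ c, w c = ∑ s, μ s * M s c

def RowPred (M : Mat n) (p q : Fin n) : Prop :=
  (¬ RowCosetD M p 0) ∧ (∃ w, RowCosetD M p w ∧ IsHighV w q) ∧
    (∀ w c, RowCosetD M p w → IsHighV w c → c ≤ q)

def colTr (i0 j0 : Fin n) (w : Fin n → ZMod 2) : Fin n → ZMod 2 :=
  fun c => if c = j0 then w j0 + w i0 else w c

lemma colTr_colTr {i0 j0 : Fin n} (h : i0 ≠ j0) (w : Fin n → ZMod 2) :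
    colTr i0 j0 (colTr i0 j0 w) = w := by
  funext c
  by_cases hc : c = j0
  · subst hc
    simp only [colTr, if_neg h, eq_self_iff_true, if_true]
    rw [add_assoc, z2_self, add_zero]
  · simp [colTr, hc]

lemma colTr_zero (i0 j0 : Fin n) : colTr i0 j0 (0 : Fin n → ZMod 2) = 0 := by
  funext c
  simp [colTr]

lemma rowCosetD_colAdd {M : Mat n} {i0 j0 : Fin n} (h : i0 ≠ j0) {p w}
    (hw : RowCosetD (colAdd M i0 j0) p w) : RowCosetD M p (colTr i0 j0 w) := by
  obtain ⟨μ, h1, h2, h3⟩ := hw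
  refine ⟨μ, h1, h2, fun c => ?_⟩
  simp only [colTr]
  by_cases hc : c = j0
  · rw [if_pos hc, hc]
    have e1 : w j0 = (∑ s, μ s * M s j0) + ∑ s, μ s * M s i0 := by
      rw [h3 j0, ← Finset.sum_add_distrib]
      refine Finset.sum_congr rfl fun s _ => ?_
      rw [← mul_add]
      congr 1
      simp [colAdd]
    have e2 : w i0 = ∑ s, μ s * M s i0 := by
      rw [h3 i0]
      refine Finset.sum_congr rfl fun s _ => ?_
      congr 1
      simp [colAdd, h]
    rw [e1, e2, add_assoc, z2_self, add_zero]
  · rw [if_neg hc, h3 c]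
    refine Finset.sum_congr rfl fun s _ => ?_
    congr 1
    simp [colAdd, hc]

lemma rowCosetD_colAdd' {M : Mat n} {i0 j0 : Fin n} (h : i0 ≠ j0) {p w}
    (hw : RowCosetD M p (colTr i0 j0 w)) : RowCosetD (colAdd M i0 j0) p w := by
  have h2 := rowCosetD_colAdd (M := colAdd M i0 j0) h (p := p) (w := colTr i0 j0 w)
  rw [colAdd_colAdd M h, colTr_colTr h] at h2
  exact h2 hw

lemma isHighV_colTr {i0 j0 : Fin n} (h : i0 < j0) {w : Fin n → ZMod 2} {c : Fin n}
    (hw : IsHighV w c) : IsHighV (colTr i0 j0 w) c := by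
  by_cases hc : c = j0
  · subst hc
    have hwi : w i0 = 0 := by
      by_contra hne
      exact absurd (hw.2 i0 hne) (not_le.mpr h)
    constructor
    · simp only [colTr, eq_self_iff_true, if_true, hwi, add_zero]
      exact hw.1
    · intro c' hc'
      simp only [colTr] at hc'
      by_cases hcc : c' = c
      · exact le_of_eq hcc.symm
      · rw [if_neg hcc] at hc'
        exact hw.2 c' hc'
  · constructor
    · simp only [colTr, if_neg hc]
      exact hw.1
    · intro c' hc'
      simp only [colTr] at hc'
      by_cases hcc : c' = j0
      · rw [if_pos hcc] at hc'
        rcases eq_or_ne (w j0) 0 with h1 | h1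
        · have h2 : w i0 ≠ 0 := fun h' => hc' (by rw [h1, h', add_zero])
          rw [hcc]
          exact le_trans (hw.2 i0 h2) h.le
        · rw [hcc]
          exact hw.2 j0 h1
      · rw [if_neg hcc] at hc'
        exact hw.2 c' hc'

lemma isHighV_colTr_iff {i0 j0 : Fin n} (h : i0 < j0) {w : Fin n → ZMod 2} {c : Fin n} :
    IsHighV (colTr i0 j0 w) c ↔ IsHighV w c := by
  constructor
  · intro hw
    have := isHighV_colTr h hw
    rwa [colTr_colTr h.ne] at this
  · exact isHighV_colTr h

lemma rowPred_step {M N : Mat n} (hstep : Step M N) (p q : Fin n) :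
    RowPred M p q ↔ RowPred N p q := by
  obtain ⟨i0, j0, hij, rfl⟩ := hstep
  have hne := hij.ne
  have hzero : RowCosetD (colAdd M i0 j0) p 0 ↔ RowCosetD M p 0 := by
    constructor
    · intro hc
      have := rowCosetD_colAdd hne hc
      rwa [colTr_zero] at this
    · intro hc
      exact rowCosetD_colAdd' hne (by rwa [colTr_zero])
  constructor
  · rintro ⟨h0, ⟨w, hw, hwq⟩, hmax⟩
    refine ⟨fun hc => h0 (hzero.mp hc), ⟨colTr i0 j0 w, ?_, ?_⟩, ?_⟩
    · exact rowCosetD_colAdd' hne (by rwa [colTr_colTr hne])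
    · exact isHighV_colTr hij hwq
    · intro w' c hw' hc'
      exact hmax (colTr i0 j0 w') c (rowCosetD_colAdd hne hw')
        ((isHighV_colTr_iff hij).mpr hc')
  · rintro ⟨h0, ⟨w, hw, hwq⟩, hmax⟩
    refine ⟨fun hc => h0 (hzero.mpr hc), ⟨colTr i0 j0 w, ?_, ?_⟩, ?_⟩
    · exact rowCosetD_colAdd hne hw
    · exact isHighV_colTr hij hwq
    · intro w' c hw' hc'
      exact hmax (colTr i0 j0 w') c (rowCosetD_colAdd' hne (by rwa [colTr_colTr hne]))
        (isHighV_colTr hij hc')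

lemma rowPred_reduces {M N : Mat n} (h : Reduces M N) (p q : Fin n) :
    RowPred M p q ↔ RowPred N p q := by
  induction h with
  | refl => rfl
  | tail _ hstep ih => rw [ih, rowPred_step hstep]

lemma rowCosetD_self (M : Mat n) (p : Fin n) : RowCosetD M p (fun c => M p c) := by
  classical
  refine ⟨fun s => if s = p then 1 else 0, by simp, ?_, ?_⟩
  · intro s hs
    dsimp only
    rw [if_neg]
    rintro rfl
    exact hs le_rfl
  · intro c
    simp [ite_mul, Finset.sum_ite_eq']

lemma rowcoset_at_low {R : Mat n} {p q : Fin n} (hlow : IsLow R p q) {w}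
    (hw : RowCosetD R p w) : w q = R p q := by
  obtain ⟨μ, h1, h2, h3⟩ := hw
  rw [h3 q]
  rw [Finset.sum_eq_single_of_mem p (Finset.mem_univ p)]
  · rw [h1, one_mul]
  · intro s _ hs
    rcases eq_or_ne (μ s) 0 with h | h
    · rw [h, zero_mul]
    · have hps : p ≤ s := by by_contra hc; exact h (h2 s hc)
      have : R s q = 0 := by
        by_contra hc
        exact hs (le_antisymm (hlow.2 s hc) hps)
      rw [this, mul_zero]

/-- clearing a single bad column of a row-coset element, using rows further down -/
lemma clear_one {R : Mat n} (hred : Reduced R) {p : Fin n} {w} (hw : RowCosetD R p w)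
    {c0 : Fin n} (h0 : w c0 ≠ 0) (hnotlow : ¬ IsLow R p c0)
    (outer : ∀ p' q', p < p' → IsLow R p' q' → ∃ u, RowCosetD R p' u ∧ ∀ c, c < q' → u c = 0) :
    ∃ w', RowCosetD R p w' ∧ (∀ c, c < c0 → w' c = w c) ∧ w' c0 = 0 := by
  obtain ⟨μ, hμp, hμsupp, hμrep⟩ := hw
  obtain ⟨s, hs⟩ : ∃ s, μ s * R s c0 ≠ 0 := by
    by_contra hc
    push_neg at hc
    exact h0 (by rw [hμrep c0]; exact Finset.sum_eq_zero fun s _ => hc s)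
  have hs1 : μ s ≠ 0 := fun h => hs (by rw [h, zero_mul])
  have hs2 : R s c0 ≠ 0 := fun h => hs (by rw [h, mul_zero])
  have hps : p ≤ s := by by_contra hc; exact hs1 (hμsupp s hc)
  obtain ⟨ℓ, hℓ⟩ := exists_isLowV (v := fun r => R r c0) ⟨s, hs2⟩
  have hℓlow : IsLow R ℓ c0 := hℓ
  have hpℓ : p < ℓ := by
    have h1 : p ≤ ℓ := le_trans hps (hℓlow.2 s hs2)
    rcases lt_or_eq_of_le h1 with h | h
    · exact h
    · exact absurd (h ▸ hℓlow) hnotlow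
  obtain ⟨u, hu, huz⟩ := outer ℓ c0 hpℓ hℓlow
  have huc0 : u c0 = R ℓ c0 := rowcoset_at_low hℓlow hu
  refine ⟨fun c => w c + u c, ?_, ?_, ?_⟩
  · obtain ⟨ν, hνℓ, hνsupp, hνrep⟩ := hu
    refine ⟨fun t => μ t + ν t, ?_, ?_, ?_⟩
    · have : ν p = 0 := hνsupp p (not_le.mpr hpℓ)
      dsimp only
      rw [hμp, this, add_zero]
    · intro t ht
      dsimp only
      rw [hμsupp t ht, hνsupp t (fun hle => ht (le_trans hpℓ.le hle)), add_zero]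
    · intro c
      dsimp only
      rw [hμrep c, hνrep c, ← Finset.sum_add_distrib]
      exact Finset.sum_congr rfl fun t _ => (add_mul _ _ _).symm
  · intro c hc
    dsimp only
    rw [huz c hc, add_zero]
  · dsimp only
    rw [huc0, z2_one h0, z2_one hℓlow.1, z2_self]

lemma maxleft_aux {R : Mat n} (hred : Reduced R) {p q : Fin n}
    (outer : ∀ p' q', p < p' → IsLow R p' q' → ∃ u, RowCosetD R p' u ∧ ∀ c, c < q' → u c = 0)
    (hlow : IsLow R p q) : ∃ w, RowCosetD R p w ∧ ∀ c, c < q → w c = 0 := by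
  suffices H : ∀ t : ℕ, t ≤ q.val → ∃ w, RowCosetD R p w ∧ ∀ c : Fin n, c.val < t → w c = 0 by
    obtain ⟨w, h1, h2⟩ := H q.val le_rfl
    exact ⟨w, h1, fun c hc => h2 c hc⟩
  intro t
  induction t with
  | zero => exact fun _ => ⟨fun c => R p c, rowCosetD_self R p, fun c hc => absurd hc (by omega)⟩
  | succ t ih =>
    intro ht
    obtain ⟨w, hw, hz⟩ := ih (by omega)
    have htn : t < n := lt_trans (by omega : t < q.val) q.isLt
    set c0 : Fin n := ⟨t, htn⟩ with hc0
    by_cases h0 : w c0 = 0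
    · refine ⟨w, hw, fun c hc => ?_⟩
      rcases Nat.lt_succ_iff_lt_or_eq.mp hc with h | h
      · exact hz c h
      · have : c = c0 := Fin.ext h
        rwa [this]
    · have hnotlow : ¬ IsLow R p c0 := by
        intro hcon
        have h1 : c0.val = q.val := congrArg Fin.val (hred p c0 q hcon hlow)
        have h2 : c0.val = t := rfl
        omega
      obtain ⟨w', hw', hagree, hzero⟩ := clear_one hred hw h0 hnotlow outer
      refine ⟨w', hw', fun c hc => ?_⟩
      rcases Nat.lt_succ_iff_lt_or_eq.mp hc with h | h
      · rw [hagree c (show c < c0 from h), hz c h]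
      · have : c = c0 := Fin.ext h
        rwa [this]

lemma maxleft {R : Mat n} (hred : Reduced R) :
    ∀ p q : Fin n, IsLow R p q → ∃ w, RowCosetD R p w ∧ ∀ c, c < q → w c = 0 := by
  suffices H : ∀ k, ∀ p q : Fin n, p.rev.val ≤ k → IsLow R p q →
      ∃ w, RowCosetD R p w ∧ ∀ c, c < q → w c = 0 by
    intro p q h
    exact H n p q (le_of_lt p.rev.isLt) h
  intro k
  induction k with
  | zero =>
    intro p q hk hlow
    refine maxleft_aux hred (fun p' q' hpp' h' => ?_) hlow
    exfalso
    have := Fin.rev_lt_rev.mpr hpp'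
    omega
  | succ k ih =>
    intro p q hk hlow
    refine maxleft_aux hred (fun p' q' hpp' h' => ih p' q' ?_ h') hlow
    have := Fin.rev_lt_rev.mpr hpp'
    omega

lemma zerorow {R : Mat n} (hred : Reduced R) (p : Fin n) (h : ∀ q, ¬ IsLow R p q) :
    RowCosetD R p 0 := by
  suffices H : ∀ t : ℕ, t ≤ n → ∃ w, RowCosetD R p w ∧ ∀ c : Fin n, c.val < t → w c = 0 by
    obtain ⟨w, h1, h2⟩ := H n le_rfl
    have : w = 0 := funext fun c => h2 c c.isLt
    rwa [this] at h1
  intro t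
  induction t with
  | zero => exact fun _ => ⟨fun c => R p c, rowCosetD_self R p, fun c hc => absurd hc (by omega)⟩
  | succ t ih =>
    intro ht
    obtain ⟨w, hw, hz⟩ := ih (by omega)
    set c0 : Fin n := ⟨t, by omega⟩ with hc0
    by_cases h0 : w c0 = 0
    · refine ⟨w, hw, fun c hc => ?_⟩
      rcases Nat.lt_succ_iff_lt_or_eq.mp hc with hlt | heq
      · exact hz c hlt
      · have : c = c0 := Fin.ext heq
        rwa [this]
    · obtain ⟨w', hw', hagree, hzero⟩ :=
        clear_one hred hw h0 (h c0) (fun p' q' _ h' => maxleft hred p' q' h')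
      refine ⟨w', hw', fun c hc => ?_⟩
      rcases Nat.lt_succ_iff_lt_or_eq.mp hc with hlt | heq
      · rw [hagree c (show c < c0 from hlt), hz c hlt]
      · have : c = c0 := Fin.ext heq
        rwa [this]

lemma rowPred_iff_isLow {R : Mat n} (hred : Reduced R) (p q : Fin n) :
    RowPred R p q ↔ IsLow R p q := by
  have fwd : ∀ q', IsLow R p q' → RowPred R p q' := by
    intro q' h
    refine ⟨?_, ?_, ?_⟩
    · intro hc
      have := rowcoset_at_low h hc
      rw [Pi.zero_apply] at this
      exact h.1 this.symm
    · obtain ⟨w, hw, hz⟩ := maxleft hred p q' h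
      refine ⟨w, hw, ?_, ?_⟩
      · rw [rowcoset_at_low h hw]
        exact h.1
      · intro c' hc'
        by_contra hcon
        exact hc' (hz c' (not_le.mp hcon))
    · intro w c hw hc
      have : w q' = R p q' := rowcoset_at_low h hw
      exact hc.2 q' (fun h' => h.1 (this ▸ h'))
  constructor
  · rintro ⟨h0, ⟨w, hw, hwq⟩, hmax⟩
    have hex : ∃ q', IsLow R p q' := by
      by_contra hc
      push_neg at hc
      exact h0 (zerorow hred p hc)
    obtain ⟨q', hq'⟩ := hex
    obtain ⟨_, ⟨w', hw', hwq'⟩, hmax'⟩ := fwd q' hq'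
    have h1 : q ≤ q' := hmax' w q hw hwq
    have h2 : q' ≤ q := hmax w' q' hw' hwq'
    have : q = q' := le_antisymm h1 h2
    rwa [this]
  · exact fwd q

/-! ## antitranspose translation -/

lemma cosetD_antiTranspose {M : Mat n} {b : Fin n} {v : Fin n → ZMod 2} :
    CosetD (antiTranspose M) b v ↔ RowCosetD M b.rev (fun c => v c.rev) := by
  constructor
  · rintro ⟨d, hdb, hsupp, hrep⟩
    refine ⟨fun s => d s.rev, by show d b.rev.rev = 1; rw [Fin.rev_rev]; exact hdb, ?_, ?_⟩
    · intro s hs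
      apply hsupp
      intro hle
      apply hs
      have : b.rev ≤ s.rev.rev := by rw [Fin.rev_le_rev]; exact hle
      rwa [Fin.rev_rev] at this
    · intro c
      have h1 : v c.rev = ∑ b', d b' * M b'.rev c := by
        rw [hrep c.rev]
        refine Finset.sum_congr rfl fun b' _ => ?_
        unfold antiTranspose
        rw [Fin.rev_rev]
      show v c.rev = ∑ s, d s.rev * M s c
      rw [h1]
      exact Fintype.sum_equiv Fin.revPerm _ _ (fun x => by simp [Fin.rev_rev])
  · rintro ⟨μ, hμ, hsupp, hrep⟩
    refine ⟨fun b' => μ b'.rev, by show μ b.rev = 1; exact hμ, ?_, ?_⟩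
    · intro b' hb'
      exact hsupp b'.rev (fun hle => hb' (Fin.rev_le_rev.mp hle))
    · intro r
      have h1 : v r = ∑ s, μ s * M s r.rev := by
        have := hrep r.rev
        dsimp only at this
        rwa [Fin.rev_rev] at this
      rw [h1]
      refine Fintype.sum_equiv Fin.revPerm _ _ (fun x => ?_)
      simp only [Fin.revPerm_apply, Fin.rev_rev]
      congr 1
      unfold antiTranspose
      rw [Fin.rev_rev]

lemma isLowV_rev {v : Fin n → ZMod 2} {a : Fin n} :
    IsLowV v a ↔ IsHighV (fun c => v c.rev) a.rev := by
  constructor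
  · rintro ⟨h1, h2⟩
    constructor
    · show v a.rev.rev ≠ 0
      rw [Fin.rev_rev]
      exact h1
    · intro c' hc'
      have h3 := h2 c'.rev hc'
      have h4 : a.rev ≤ c'.rev.rev := Fin.rev_le_rev.mpr h3
      rwa [Fin.rev_rev] at h4
  · rintro ⟨h1, h2⟩
    constructor
    · have : v a.rev.rev ≠ 0 := h1
      rwa [Fin.rev_rev] at this
    · intro r hr
      have h3 : v r.rev.rev ≠ 0 := by rwa [Fin.rev_rev]
      have h4 := h2 r.rev h3
      have h5 : a.rev ≤ r.rev := h4
      exact Fin.rev_le_rev.mp h5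

lemma rowPred_iff_colPred_anti (M : Mat n) (p q : Fin n) :
    RowPred M p q ↔ ColPred (antiTranspose M) q.rev p.rev := by
  have hrev : ∀ v : Fin n → ZMod 2,
      CosetD (antiTranspose M) p.rev v ↔ RowCosetD M p (fun c => v c.rev) := by
    intro v
    rw [cosetD_antiTranspose, Fin.rev_rev]
  have hzero : CosetD (antiTranspose M) p.rev 0 ↔ RowCosetD M p 0 := hrev 0
  constructor
  · rintro ⟨h0, ⟨w, hw, hwq⟩, hmax⟩
    refine ⟨fun hc => h0 (hzero.mp hc), ?_, ?_⟩
    · refine ⟨fun i => w i.rev, ?_, ?_⟩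
      · rw [hrev]
        have he : (fun c : Fin n => w c.rev.rev) = w := funext fun c => by rw [Fin.rev_rev]
        show RowCosetD M p (fun c => w c.rev.rev)
        rw [he]
        exact hw
      · rw [isLowV_rev]
        simp only [Fin.rev_rev]
        exact hwq
    · intro v a' hv hva'
      have hw' : RowCosetD M p (fun c => v c.rev) := (hrev v).mp hv
      have hhigh : IsHighV (fun c => v c.rev) a'.rev := isLowV_rev.mp hva'
      have h1 := hmax _ a'.rev hw' hhigh
      have h2 : q.rev ≤ a'.rev.rev := Fin.rev_le_rev.mpr h1
      rwa [Fin.rev_rev] at h2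
  · rintro ⟨h0, ⟨v, hv, hva⟩, hmin⟩
    refine ⟨fun hc => h0 (hzero.mpr hc), ?_, ?_⟩
    · refine ⟨fun c => v c.rev, (hrev v).mp hv, ?_⟩
      have h1 := isLowV_rev.mp hva
      rwa [Fin.rev_rev] at h1
    · intro w c hw hc
      have hv' : CosetD (antiTranspose M) p.rev (fun i => w i.rev) := by
        rw [hrev]
        have he : (fun c : Fin n => w c.rev.rev) = w := funext fun c => by rw [Fin.rev_rev]
        show RowCosetD M p (fun c => w c.rev.rev)
        rw [he]
        exact hw
      have hlow : IsLowV (fun i => w i.rev) c.rev := by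
        rw [isLowV_rev]
        simp only [Fin.rev_rev]
        exact hc
      have h1 := hmin _ c.rev hv' hlow
      exact Fin.rev_le_rev.mp h1

/-- main duality: the lows of any reduced reduction of the anti-transpose are
the reversed lows of any reduced reduction. -/
lemma isLow_anti_iff {B C R0 : Mat n} (hC : Reduces (antiTranspose B) C) (hCred : Reduced C)
    (hR0 : Reduces B R0) (hR0red : Reduced R0) (a b : Fin n) :
    IsLow C a b ↔ IsLow R0 b.rev a.rev := by
  rw [← colPred_iff_isLow hCred a b, ← colPred_reduces hC a b]
  have h1 : ColPred (antiTranspose B) a b ↔ RowPred B b.rev a.rev := by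
    have := rowPred_iff_colPred_anti B b.rev a.rev
    rw [Fin.rev_rev, Fin.rev_rev] at this
    exact this.symm
  rw [h1, rowPred_reduces hR0, rowPred_iff_isLow hR0red]

/-! ## existence of twist reductions -/

def FStep (R : Mat n) (A A' : Mat n) : Prop :=
  ∃ i j : Fin n, i < j ∧ (∀ r, A r i = R r i) ∧ A' = colAdd A i j

lemma finalReduces_iff (M R : Mat n) :
    FinalReduces M R ↔ Reduced R ∧ Relation.ReflTransGen (FStep R) M R := Iff.rfl

lemma fstep_step {R A A' : Mat n} (h : FStep R A A') : Step A A' := by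
  obtain ⟨i, j, hij, _, rfl⟩ := h
  exact ⟨i, j, hij, rfl⟩

lemma finalReduces_reduces {M R : Mat n} (h : FinalReduces M R) : Reduces M R :=
  Relation.ReflTransGen.mono (fun _ _ hs => fstep_step hs) _ _ h.2

def PartRed (M : Mat n) (k : ℕ) : Prop :=
  ∀ i j j' : Fin n, j.val < k → j'.val < k → IsLow M i j → IsLow M i j' → j = j'

lemma isLow_congr {A B : Mat n} {j : Fin n} (h : ∀ r, A r j = B r j) (i : Fin n) :
    IsLow A i j ↔ IsLow B i j := by
  constructor
  · rintro ⟨h1, h2⟩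
    exact ⟨h i ▸ h1, fun r hr => h2 r (by rw [h r]; exact hr)⟩
  · rintro ⟨h1, h2⟩
    exact ⟨(h i).symm ▸ h1, fun r hr => h2 r (by rw [← h r]; exact hr)⟩

lemma exist_inner (k : Fin n) : ∀ (m : ℕ) (N : Mat n), PartRed N k.val →
    (∀ r : Fin n, N r k ≠ 0 → r.val < m) →
    ∃ N', (∀ r c, c ≠ k → N' r c = N r c) ∧ PartRed N' (k.val + 1) ∧
      Relation.ReflTransGen
        (fun A A' => ∃ i, i < k ∧ (∀ r, A r i = N r i) ∧ A' = colAdd A i k) N N' := by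
  intro m
  induction m with
  | zero =>
    intro N hpart hbound
    have hz : ∀ r, N r k = 0 := by
      intro r
      by_contra hc
      exact absurd (hbound r hc) (by omega)
    refine ⟨N, fun _ _ _ => rfl, ?_, .refl⟩
    intro i j j' hj hj' hl hl'
    have hj2 : j.val < k.val := by
      rcases Nat.lt_succ_iff_lt_or_eq.mp hj with h | h
      · exact h
      · exact absurd (show N i j ≠ 0 from hl.1) (by rw [Fin.ext h]; simp [hz i])
    have hj'2 : j'.val < k.val := by
      rcases Nat.lt_succ_iff_lt_or_eq.mp hj' with h | h
      · exact h
      · exact absurd (show N i j' ≠ 0 from hl'.1) (by rw [Fin.ext h]; simp [hz i])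
    exact hpart i j j' hj2 hj'2 hl hl'
  | succ m ih =>
    intro N hpart hbound
    by_cases hz : ∀ r, N r k = 0
    · refine ⟨N, fun _ _ _ => rfl, ?_, .refl⟩
      intro i j j' hj hj' hl hl'
      have hj2 : j.val < k.val := by
        rcases Nat.lt_succ_iff_lt_or_eq.mp hj with h | h
        · exact h
        · exact absurd (show N i j ≠ 0 from hl.1) (by rw [Fin.ext h]; simp [hz i])
      have hj'2 : j'.val < k.val := by
        rcases Nat.lt_succ_iff_lt_or_eq.mp hj' with h | h
        · exact h
        · exact absurd (show N i j' ≠ 0 from hl'.1) (by rw [Fin.ext h]; simp [hz i])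
      exact hpart i j j' hj2 hj'2 hl hl'
    · push_neg at hz
      obtain ⟨ℓ, hℓ⟩ := exists_isLowV (v := fun r => N r k) hz
      have hℓlow : IsLow N ℓ k := hℓ
      by_cases hex : ∃ j : Fin n, j.val < k.val ∧ IsLow N ℓ j
      · obtain ⟨j0, hj0k, hj0low⟩ := hex
        have hj0kf : j0 < k := hj0k
        have hN1 : ∀ r c, c ≠ k → colAdd N j0 k r c = N r c := by
          intro r c hc
          simp [colAdd, hc]
        have hN1k : ∀ r, colAdd N j0 k r k = N r k + N r j0 := by
          intro r
          simp [colAdd]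
        have hbound1 : ∀ r : Fin n, colAdd N j0 k r k ≠ 0 → r.val < m := by
          intro r hr
          rw [hN1k r] at hr
          have hrℓ : r < ℓ := by
            rcases lt_trichotomy r ℓ with h | h | h
            · exact h
            · exfalso
              apply hr
              rw [h, z2_one hℓlow.1, z2_one hj0low.1, z2_self]
            · exfalso
              apply hr
              have e1 : N r k = 0 := by
                by_contra hc
                exact absurd (hℓlow.2 r hc) (not_le.mpr h)
              have e2 : N r j0 = 0 := by
                by_contra hc
                exact absurd (hj0low.2 r hc) (not_le.mpr h)
              rw [e1, e2, add_zero]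
          have := hbound ℓ hℓlow.1
          have : r.val < ℓ.val := hrℓ
          omega
        have hpart1 : PartRed (colAdd N j0 k) k.val := by
          intro i j j' hj hj' hl hl'
          have hjne : j ≠ k := fun h => by rw [h] at hj; omega
          have hj'ne : j' ≠ k := fun h => by rw [h] at hj'; omega
          exact hpart i j j' hj hj'
            ((isLow_congr (fun r => hN1 r j hjne) i).mp hl)
            ((isLow_congr (fun r => hN1 r j' hj'ne) i).mp hl')
        obtain ⟨N', hcols, hpart', hchain⟩ := ih (colAdd N j0 k) hpart1 hbound1
        refine ⟨N', fun r c hc => by rw [hcols r c hc, hN1 r c hc], hpart', ?_⟩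
        refine Relation.ReflTransGen.head ⟨j0, hj0kf, fun r => rfl, rfl⟩ ?_
        refine Relation.ReflTransGen.mono (fun A A' hs => ?_) _ _ hchain
        obtain ⟨i, hik, hsrc, rfl⟩ := hs
        exact ⟨i, hik, fun r => by rw [hsrc r, hN1 r i hik.ne], rfl⟩
      · push_neg at hex
        refine ⟨N, fun _ _ _ => rfl, ?_, .refl⟩
        intro i j j' hj hj' hl hl'
        by_cases hjk : j = k <;> by_cases hj'k : j' = k
        · rw [hjk, hj'k]
        · exfalso
          have hlk : IsLow N i k := hjk ▸ hl
          have hi : i = ℓ := isLowV_unique (v := fun r => N r k) hlk hℓ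
          have hj'v : j'.val < k.val := by
            rcases Nat.lt_succ_iff_lt_or_eq.mp hj' with h | h
            · exact h
            · exact absurd (Fin.ext h) hj'k
          exact hex j' hj'v (hi ▸ hl')
        · exfalso
          have hlk : IsLow N i k := hj'k ▸ hl'
          have hi : i = ℓ := isLowV_unique (v := fun r => N r k) hlk hℓ
          have hjv : j.val < k.val := by
            rcases Nat.lt_succ_iff_lt_or_eq.mp hj with h | h
            · exact h
            · exact absurd (Fin.ext h) hjk
          exact hex j hjv (hi ▸ hl)
        · have hjv : j.val < k.val := by
            rcases Nat.lt_succ_iff_lt_or_eq.mp hj with h | h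
            · exact h
            · exact absurd (Fin.ext h) hjk
          have hj'v : j'.val < k.val := by
            rcases Nat.lt_succ_iff_lt_or_eq.mp hj' with h | h
            · exact h
            · exact absurd (Fin.ext h) hj'k
          exact hpart i j j' hjv hj'v hl hl'

lemma exist_outer (M : Mat n) : ∀ k : ℕ, k ≤ n →
    ∃ N : Mat n, PartRed N k ∧ (∀ c : Fin n, k ≤ c.val → ∀ r, N r c = M r c) ∧
      ∀ R' : Mat n, (∀ c : Fin n, c.val < k → ∀ r, R' r c = N r c) →
        Relation.ReflTransGen (FStep R') M N := by
  intro k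
  induction k with
  | zero =>
    exact fun _ => ⟨M, fun i j j' hj => absurd hj (by omega), fun _ _ _ => rfl,
      fun _ _ => .refl⟩
  | succ k ih =>
    intro hk
    obtain ⟨N, hpart, hcols, hchain⟩ := ih (by omega)
    have hkn : k < n := by omega
    set kf : Fin n := ⟨k, hkn⟩ with hkf
    obtain ⟨N', hcols', hpart', hchain'⟩ := exist_inner kf n N hpart (fun r _ => r.isLt)
    refine ⟨N', hpart', ?_, ?_⟩
    · intro c hc r
      have hck : c ≠ kf := by
        intro h
        rw [h] at hc
        simp only [hkf] at hc
        omega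
      rw [hcols' r c hck, hcols c (by omega) r]
    · intro R' hR'
      have hR'N : ∀ c : Fin n, c.val < k → ∀ r, R' r c = N r c := by
        intro c hc r
        have hck : c ≠ kf := by
          intro h
          rw [h] at hc
          simp only [hkf] at hc
          omega
        rw [hR' c (by omega) r, hcols' r c hck]
      refine Relation.ReflTransGen.trans (hchain R' hR'N) ?_
      refine Relation.ReflTransGen.mono (fun A A' hs => ?_) _ _ hchain'
      obtain ⟨i, hik, hsrc, rfl⟩ := hs
      refine ⟨i, kf, hik, fun r => ?_, rfl⟩
      rw [hsrc r, ← hR'N i hik r]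

lemma exists_finalReduces (M : Mat n) : ∃ R, FinalReduces M R := by
  obtain ⟨N, hpart, _, hchain⟩ := exist_outer M n le_rfl
  refine ⟨N, fun i j j' hl hl' => hpart i j j' j.isLt j'.isLt hl hl', ?_⟩
  exact hchain N (fun _ _ _ => rfl)

/-! ## simulation lemmas -/

lemma sim_pi {R : Mat n} {T : Set (Fin n)} (hRz : ∀ q, q ∉ T → ∀ r, R r q = 0)
    (π : Mat n → Mat n) (hπin : ∀ A r c, c ∈ T → π A r c = A r c)
    (hπout : ∀ A r c, c ∉ T → π A r c = 0)
    {A₁ A₂ : Mat n} (h : Relation.ReflTransGen (FStep R) A₁ A₂) :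
    Relation.ReflTransGen (FStep R) (π A₁) (π A₂) := by
  induction h with
  | refl => exact .refl
  | @tail A A' _ hstep ih =>
    obtain ⟨i, j, hij, hsrc, rfl⟩ := hstep
    by_cases hi : i ∈ T
    · by_cases hj : j ∈ T
      · refine ih.tail ⟨i, j, hij, fun r => by rw [hπin A r i hi, hsrc r], ?_⟩
        funext r c
        by_cases hc : c ∈ T
        · rw [hπin _ r c hc]
          by_cases hcj : c = j
          · subst hcj
            show colAdd A i c r c = _
            rw [show colAdd A i c r c = A r c + A r i from if_pos rfl,
              show colAdd (π A) i c r c = π A r c + π A r i from if_pos rfl,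
              hπin A r c hc, hπin A r i hi]
          · rw [show colAdd A i j r c = A r c from if_neg hcj,
              show colAdd (π A) i j r c = π A r c from if_neg hcj, hπin A r c hc]
        · rw [hπout _ r c hc]
          have hcj : c ≠ j := fun h => hc (h ▸ hj)
          rw [show colAdd (π A) i j r c = π A r c from if_neg hcj, hπout A r c hc]
      · have heq : π (colAdd A i j) = π A := by
          funext r c
          by_cases hc : c ∈ T
          · have hcj : c ≠ j := fun h => hj (h ▸ hc)
            rw [hπin _ r c hc, hπin A r c hc,
              show colAdd A i j r c = A r c from if_neg hcj]
          · rw [hπout _ r c hc, hπout A r c hc]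
        rw [heq]
        exact ih
    · have hAi : ∀ r, A r i = 0 := fun r => by rw [hsrc r, hRz i hi r]
      have heq : colAdd A i j = A := by
        funext r c
        by_cases hc : c = j
        · rw [hc, show colAdd A i j r j = A r j + A r i from if_pos rfl, hAi r, add_zero]
        · exact if_neg hc
      rw [heq]
      exact ih

lemma sim_phi {R B : Mat n} {T : Set (Fin n)}
    (φ : Mat n → Mat n) (hφin : ∀ A r c, c ∈ T → φ A r c = A r c)
    (hφout : ∀ A r c, c ∉ T → φ A r c = A r c + B r c)
    (hRz : ∀ q, q ∉ T → ∀ r, R r q = 0)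
    {A₁ A₂ : Mat n} (h : Relation.ReflTransGen (FStep R) A₁ A₂) :
    Relation.ReflTransGen (FStep R) (φ A₁) (φ A₂) := by
  induction h with
  | refl => exact .refl
  | @tail A A' _ hstep ih =>
    obtain ⟨i, j, hij, hsrc, rfl⟩ := hstep
    by_cases hi : i ∈ T
    · refine ih.tail ⟨i, j, hij, fun r => by rw [hφin A r i hi, hsrc r], ?_⟩
      funext r c
      by_cases hcj : c = j
      · subst hcj
        rw [show colAdd (φ A) i c r c = φ A r c + φ A r i from if_pos rfl, hφin A r i hi]
        by_cases hc : c ∈ T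
        · rw [hφin _ r c hc, hφin A r c hc,
            show colAdd A i c r c = A r c + A r i from if_pos rfl]
        · rw [hφout _ r c hc, hφout A r c hc,
            show colAdd A i c r c = A r c + A r i from if_pos rfl]
          ring
      · rw [show colAdd (φ A) i j r c = φ A r c from if_neg hcj]
        by_cases hc : c ∈ T
        · rw [hφin _ r c hc, hφin A r c hc, show colAdd A i j r c = A r c from if_neg hcj]
        · rw [hφout _ r c hc, hφout A r c hc, show colAdd A i j r c = A r c from if_neg hcj]
    · have hAi : ∀ r, A r i = 0 := fun r => by rw [hsrc r, hRz i hi r]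
      have heq : colAdd A i j = A := by
        funext r c
        by_cases hc : c = j
        · rw [hc, show colAdd A i j r j = A r j + A r i from if_pos rfl, hAi r, add_zero]
        · exact if_neg hc
      rw [heq]
      exact ih

lemma addT {R : Mat n} (c : Fin n) : ∀ (T : Finset (Fin n)), ∀ A : Mat n,
    (∀ b ∈ T, b < c ∧ ∀ r, A r b = R r b) →
    ∃ A', Relation.ReflTransGen (FStep R) A A' ∧ (∀ r c', c' ≠ c → A' r c' = A r c') ∧
      ∀ r, A' r c = A r c + ∑ b ∈ T, R r b := by
  intro T
  induction T using Finset.induction_on with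
  | empty => exact fun A _ => ⟨A, .refl, fun _ _ _ => rfl, fun r => by simp⟩
  | @insert b T hbT ih =>
    intro A hT
    have hbc := (hT b (Finset.mem_insert_self b T)).1
    have hsrc := (hT b (Finset.mem_insert_self b T)).2
    have hA1ne : ∀ r c', c' ≠ c → colAdd A b c r c' = A r c' := fun r c' hc' => if_neg hc'
    have hA1c : ∀ r, colAdd A b c r c = A r c + A r b := fun r => if_pos rfl
    obtain ⟨A', hchain, hne, hcc⟩ := ih (colAdd A b c) (fun b' hb' => by
      have h1 := hT b' (Finset.mem_insert_of_mem hb')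
      exact ⟨h1.1, fun r => by rw [hA1ne r b' h1.1.ne, h1.2 r]⟩)
    refine ⟨A', .head ⟨b, c, hbc, hsrc, rfl⟩ hchain,
      fun r c' hc' => by rw [hne r c' hc', hA1ne r c' hc'], fun r => ?_⟩
    rw [hcc r, hA1c r, hsrc r, Finset.sum_insert hbT, add_assoc]

lemma phase2 {R B : Mat n} {S : Set (Fin n)}
    (hRz : ∀ q, q ∉ S → ∀ r, R r q = 0)
    (hrep : ∀ c, c ∉ S → ∃ T : Finset (Fin n), (∀ b ∈ T, b < c ∧ b ∈ S) ∧
        ∀ r, B r c = ∑ b ∈ T, R r b) :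
    ∀ s : Finset (Fin n), ∀ A : Mat n,
      (∀ c, c ∉ s → ∀ r, A r c = R r c) →
      (∀ c ∈ s, c ∉ S ∧ ∀ r, A r c = B r c) →
      Relation.ReflTransGen (FStep R) A R := by
  intro s
  induction s using Finset.induction_on with
  | empty =>
    intro A h1 _
    have : A = R := funext fun r => funext fun c => h1 c (by simp) r
    rw [this]
  | @insert c s hcs ih =>
    intro A h1 h2
    obtain ⟨hcS, hAc⟩ := h2 c (Finset.mem_insert_self c s)
    obtain ⟨T, hT, hrepc⟩ := hrep c hcS
    obtain ⟨A', hchain, hne, hcc⟩ := addT c T A (fun b hb => by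
      refine ⟨(hT b hb).1, fun r => ?_⟩
      have hbS := (hT b hb).2
      have hbnotin : b ∉ insert c s := by
        intro hmem
        rcases Finset.mem_insert.mp hmem with h | h
        · exact hcS (h ▸ hbS)
        · exact ((h2 b (Finset.mem_insert_of_mem h)).1) hbS
      exact h1 b hbnotin r)
    refine hchain.trans (ih A' ?_ ?_)
    · intro c' hc' r
      by_cases hcc' : c' = c
      · subst hcc'
        rw [hcc r, hAc r, ← hrepc r, z2_self, hRz c' hcS r]
      · have hc'notin : c' ∉ insert c s := by
          intro hmem
          rcases Finset.mem_insert.mp hmem with h | h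
          · exact hcc' h
          · exact hc' h
        rw [hne r c' hcc', h1 c' hc'notin r]
    · intro c' hc'
      have hc's : c' ∈ insert c s := Finset.mem_insert_of_mem hc'
      have hcne : c' ≠ c := fun h => hcs (h ▸ hc')
      exact ⟨(h2 c' hc's).1, fun r => by rw [hne r c' hcne, (h2 c' hc's).2 r]⟩

/-! ## span representation of positive columns -/

lemma colB_span {B R0 : Mat n} (hR0 : Reduces B R0) {c : Fin n}
    (hzero : ∀ r, R0 r c = 0) :
    ∃ e : Fin n → ZMod 2, (∀ b, ¬ b < c → e b = 0) ∧ ∀ r, B r c = ∑ b, e b * B r b := by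
  classical
  have h0 : CosetD R0 c 0 := by
    refine ⟨fun x => if x = c then 1 else 0, by simp, ?_, ?_⟩
    · intro x hx
      dsimp only
      rw [if_neg]
      rintro rfl
      exact hx le_rfl
    · intro r
      rw [Pi.zero_apply]
      rw [show (∑ b, (if b = c then (1 : ZMod 2) else 0) * R0 r b) = R0 r c by
        simp [ite_mul, Finset.sum_ite_eq']]
      exact (hzero r).symm
  have h1 : CosetD B c 0 := (cosetD_reduces hR0 c 0).mpr h0
  obtain ⟨d, hdc, hsupp, hrep⟩ := h1
  refine ⟨fun b => if b = c then 0 else d b, ?_, ?_⟩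
  · intro b hb
    by_cases hbc : b = c
    · simp [hbc]
    · dsimp only
      rw [if_neg hbc]
      exact hsupp b (fun hle => hb (lt_of_le_of_ne hle hbc))
  · intro r
    have h2 : (0 : ZMod 2) = ∑ b, d b * B r b := by
      have := hrep r
      rwa [Pi.zero_apply] at this
    have h3 : ∀ b : Fin n, d b * B r b
        = (if b = c then B r b else 0) + (if b = c then 0 else d b) * B r b := by
      intro b
      by_cases hbc : b = c
      · rw [if_pos hbc, if_pos hbc, hbc, hdc, one_mul, zero_mul, add_zero]
      · rw [if_neg hbc, if_neg hbc, zero_add]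
    rw [Finset.sum_congr rfl (fun b _ => h3 b), Finset.sum_add_distrib] at h2
    rw [show (∑ b, if b = c then B r b else 0) = B r c by simp [Finset.sum_ite_eq']] at h2
    exact (z2_eq h2.symm).symm

lemma comp_rep {B B' : Mat n} {v e : Fin n → ZMod 2}
    (hv : ∀ r, v r = ∑ a, e a * B r a)
    (G : Fin n → Fin n → ZMod 2)
    (hG : ∀ a, e a ≠ 0 → ∀ r, B r a = ∑ x, G a x * B' r x) :
    ∀ r, v r = ∑ x, (∑ a, e a * G a x) * B' r x := by
  intro r
  rw [hv r]
  have h1 : ∀ a : Fin n, e a * B r a = ∑ x, e a * G a x * B' r x := by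
    intro a
    rcases eq_or_ne (e a) 0 with h | h
    · simp [h]
    · rw [hG a h r, Finset.mul_sum]
      exact Finset.sum_congr rfl fun x _ => (mul_assoc _ _ _).symm
  rw [Finset.sum_congr rfl (fun a _ => h1 a), Finset.sum_comm]
  exact Finset.sum_congr rfl fun x _ => by rw [Finset.sum_mul]

lemma cll {B B' : Mat n} {S : Set (Fin n)}
    (hin : ∀ b, b ∈ S → ∀ r, B' r b = B r b)
    (hspan : ∀ b : Fin n, b ∉ S →
      ∃ e : Fin n → ZMod 2, (∀ x, ¬ x < b → e x = 0) ∧ ∀ r, B r b = ∑ x, e x * B r x) :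
    ∀ b : Fin n, ∃ g : Fin n → ZMod 2, (∀ x, ¬ x ≤ b → g x = 0) ∧
      ∀ r, B r b = ∑ x, g x * B' r x := by
  classical
  suffices H : ∀ m : ℕ, ∀ b : Fin n, b.val ≤ m → ∃ g : Fin n → ZMod 2,
      (∀ x, ¬ x ≤ b → g x = 0) ∧ ∀ r, B r b = ∑ x, g x * B' r x by
    exact fun b => H n b (le_of_lt b.isLt)
  intro m
  induction m using Nat.strong_induction_on with
  | _ m ih =>
    intro b hb
    by_cases hbS : b ∈ S
    · refine ⟨fun x => if x = b then 1 else 0, ?_, ?_⟩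
      · intro x hx
        dsimp only
        rw [if_neg]
        rintro rfl
        exact hx le_rfl
      · intro r
        rw [show (∑ x, (if x = b then (1 : ZMod 2) else 0) * B' r x) = B' r b by
          simp [ite_mul, Finset.sum_ite_eq']]
        exact (hin b hbS r).symm
    · obtain ⟨e, hesupp, herep⟩ := hspan b hbS
      have hIH : ∀ a : Fin n, e a ≠ 0 → ∃ g : Fin n → ZMod 2,
          (∀ x, ¬ x ≤ a → g x = 0) ∧ ∀ r, B r a = ∑ x, g x * B' r x := by
        intro a ha
        have hab : a < b := by
          by_contra hc
          exact ha (hesupp a hc)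
        rcases Nat.eq_zero_or_pos m with hm | hm
        · exfalso
          have : a.val < b.val := hab
          omega
        · exact ih (m - 1) (by omega) a (by have : a.val < b.val := hab; omega)
      set G : Fin n → Fin n → ZMod 2 :=
        fun a => if h : e a ≠ 0 then (hIH a h).choose else 0 with hG
      have hGsupp : ∀ a, e a ≠ 0 → ∀ x, ¬ x ≤ a → G a x = 0 := by
        intro a ha x hx
        rw [hG]
        dsimp only
        rw [dif_pos ha]
        exact (hIH a ha).choose_spec.1 x hx
      have hGrep : ∀ a, e a ≠ 0 → ∀ r, B r a = ∑ x, G a x * B' r x := by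
        intro a ha r
        rw [hG]
        dsimp only
        rw [show (∑ x, (if h : e a ≠ 0 then (hIH a h).choose else 0) x * B' r x)
            = ∑ x, (hIH a ha).choose x * B' r x from
          Finset.sum_congr rfl fun x _ => by rw [dif_pos ha]]
        exact (hIH a ha).choose_spec.2 r
      refine ⟨fun x => ∑ a, e a * G a x, ?_, comp_rep herep G hGrep⟩
      intro x hx
      apply Finset.sum_eq_zero
      intro a _
      rcases eq_or_ne (e a) 0 with h' | h'
      · rw [h', zero_mul]
      · have hab : a < b := by
          by_contra hc
          exact h' (hesupp a hc)
        have hxa : ¬ x ≤ a := fun hle => hx (le_trans hle hab.le)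
        rw [hGsupp a h' x hxa, mul_zero]

lemma rep_final {B B' R : Mat n} {S : Set (Fin n)}
    (hin : ∀ b, b ∈ S → ∀ r, B' r b = B r b)
    (hspan : ∀ b : Fin n, b ∉ S →
      ∃ e : Fin n → ZMod 2, (∀ x, ¬ x < b → e x = 0) ∧ ∀ r, B r b = ∑ x, e x * B r x)
    (hR : Reduces B' R) (hRz : ∀ q, q ∉ S → ∀ r, R r q = 0)
    {c : Fin n} (hc : c ∉ S) :
    ∃ T : Finset (Fin n), (∀ b ∈ T, b < c ∧ b ∈ S) ∧ ∀ r, B r c = ∑ b ∈ T, R r b := by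
  classical
  obtain ⟨e, hesupp, herep⟩ := hspan c hc
  have hcll := cll hin hspan
  choose G hGsupp hGrep using hcll
  have hrep' : ∀ r, B r c = ∑ x, (∑ a, e a * G a x) * B' r x :=
    comp_rep herep G (fun a _ r => hGrep a r)
  have hhsupp : ∀ x, ¬ x < c → (∑ a, e a * G a x) = 0 := by
    intro x hx
    apply Finset.sum_eq_zero
    intro a _
    rcases eq_or_ne (e a) 0 with h' | h'
    · rw [h', zero_mul]
    · have hac : a < c := by
        by_contra hcon
        exact h' (hesupp a hcon)
      have hxa : ¬ x ≤ a := fun hle => hx (lt_of_le_of_lt hle hac)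
      rw [hGsupp a x hxa, mul_zero]
  have hsp : SpanD B' c (fun r => B r c) := ⟨_, hhsupp, fun r => hrep' r⟩
  have hsp2 : SpanD R c (fun r => B r c) := (spanD_reduces hR c _).mp hsp
  obtain ⟨f, hfsupp, hfrep⟩ := hsp2
  refine ⟨Finset.univ.filter (fun b => f b ≠ 0 ∧ ∃ r', R r' b ≠ 0), ?_, rep_T hfrep⟩
  intro b hb
  obtain ⟨hf, hr⟩ := (Finset.mem_filter.mp hb).2
  constructor
  · by_contra hcon
    exact hf (hfsupp b hcon)
  · by_contra hcon
    obtain ⟨r', hr'⟩ := hr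
    exact hr' (hRz b hcon r')

end Saving

/-- saving works.  Let `C` be the reduced coboundary matrix of
the filtration and let `S` be the set of indices `n − 1 − low(C_i)` (0-based)
over nonzero columns `C_i` of `C`.  Then `S` is exactly the set of negative
simplices (second coordinates of persistence pairs of the boundary matrix `B`),
and the twist reduction of the matrix `B'` obtained from `B` by zeroing all
columns outside `S` coincides with the twist reduction of `B`. -/
theorem saving_works
    {V : Type} [DecidableEq V] {n : ℕ} (σ : Fin n → Finset V)
    (hinj : Function.Injective σ)
    (hne : ∀ i, (σ i).Nonempty)
    (hfilt : ∀ j : Fin n, ∀ t ⊆ σ j, t.Nonempty → ∃ i ≤ j, σ i = t)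
    (C : Matrix (Fin n) (Fin n) (ZMod 2))
    (hC : Reduces (antiTranspose (bmat σ)) C) (hCred : Reduced C)
    (S : Set (Fin n)) (hS : S = {j : Fin n | ∃ i, IsLow C j.rev i})
    (B' : Matrix (Fin n) (Fin n) (ZMod 2))
    (hB'in : ∀ r c, c ∈ S → B' r c = bmat σ r c)
    (hB'out : ∀ r c, c ∉ S → B' r c = 0) :
    S = {j : Fin n | ∃ i, PersPair (bmat σ) i j} ∧
    ∀ R, FinalReduces (bmat σ) R ↔ FinalReduces B' R := by
  classical
  obtain ⟨R0, hR0⟩ := Saving.exists_finalReduces (bmat σ)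
  have hR0red : Reduced R0 := hR0.1
  have hR0red' : Reduces (bmat σ) R0 := Saving.finalReduces_reduces hR0
  have hdual : ∀ a b : Fin n, IsLow C a b ↔ IsLow R0 b.rev a.rev :=
    Saving.isLow_anti_iff hC hCred hR0red' hR0red
  have hpair : ∀ p q : Fin n, PersPair (bmat σ) p q ↔ IsLow R0 p q := by
    intro p q
    rw [← Saving.persPair_of_colPred hR0red' hR0red,
      Saving.colPred_reduces hR0red' p q, Saving.colPred_iff_isLow hR0red p q]
  have hpart1 : S = {j : Fin n | ∃ i, PersPair (bmat σ) i j} := by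
    rw [hS]
    ext j
    simp only [Set.mem_setOf_eq]
    constructor
    · rintro ⟨i, hi⟩
      refine ⟨i.rev, (hpair i.rev j).mpr ?_⟩
      have h1 := (hdual j.rev i).mp hi
      rwa [Fin.rev_rev] at h1
    · rintro ⟨i, hi⟩
      refine ⟨i.rev, (hdual j.rev i.rev).mpr ?_⟩
      rw [Fin.rev_rev, Fin.rev_rev]
      exact (hpair i j).mp hi
  refine ⟨hpart1, ?_⟩
  have hBzeroB : ∀ R : Matrix (Fin n) (Fin n) (ZMod 2), Reduces (bmat σ) R → Reduced R →
      ∀ q, q ∉ S → ∀ r, R r q = 0 := by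
    intro R hR hRred q hq r
    by_contra hc
    apply hq
    rw [hpart1]
    obtain ⟨a, ha⟩ := Saving.exists_isLowV (v := fun r' => R r' q) ⟨r, hc⟩
    exact ⟨a, R, hR, hRred, ha⟩
  have hBzeroB' : ∀ R : Matrix (Fin n) (Fin n) (ZMod 2), Reduces B' R → Reduced R →
      ∀ q, q ∉ S → ∀ r, R r q = 0 := by
    intro R hR hRred q hq r
    by_contra hc
    obtain ⟨a, ha⟩ := Saving.exists_isLowV (v := fun r' => R r' q) ⟨r, hc⟩
    have hcp : Saving.ColPred B' a q :=
      (Saving.colPred_reduces hR a q).mpr ((Saving.colPred_iff_isLow hRred a q).mpr ha)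
    apply hcp.1
    refine ⟨fun x => if x = q then 1 else 0, by simp, ?_, ?_⟩
    · intro x hx
      dsimp only
      rw [if_neg]
      rintro rfl
      exact hx le_rfl
    · intro r'
      rw [Pi.zero_apply,
        show (∑ b, (if b = q then (1 : ZMod 2) else 0) * B' r' b) = B' r' q by
          simp [ite_mul, Finset.sum_ite_eq'],
        hB'out r' q hq]
  have hR0z : ∀ q, q ∉ S → ∀ r, R0 r q = 0 := hBzeroB R0 hR0red' hR0red
  have hspan : ∀ b : Fin n, b ∉ S → ∃ e : Fin n → ZMod 2,
      (∀ x, ¬ x < b → e x = 0) ∧ ∀ r, bmat σ r b = ∑ x, e x * bmat σ r x :=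
    fun b hb => Saving.colB_span hR0red' (hR0z b hb)
  have hin : ∀ b, b ∈ S → ∀ r, B' r b = bmat σ r b := fun b hb r => hB'in r b hb
  intro R
  rw [Saving.finalReduces_iff, Saving.finalReduces_iff]
  constructor
  · rintro ⟨hRred, hchain⟩
    have hRall : Reduces (bmat σ) R :=
      Relation.ReflTransGen.mono (fun _ _ hs => Saving.fstep_step hs) _ _ hchain
    have hRz : ∀ q, q ∉ S → ∀ r, R r q = 0 := hBzeroB R hRall hRred
    have h1 := Saving.sim_pi hRz (fun A r c => if c ∈ S then A r c else 0)
      (fun A r c hc => if_pos hc) (fun A r c hc => if_neg hc) hchain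
    have hπB : (fun r c => if c ∈ S then bmat σ r c else 0) = B' := by
      funext r c
      by_cases hc : c ∈ S
      · rw [if_pos hc, hB'in r c hc]
      · rw [if_neg hc, hB'out r c hc]
    have hπR : (fun r c => if c ∈ S then R r c else 0) = R := by
      funext r c
      by_cases hc : c ∈ S
      · rw [if_pos hc]
      · rw [if_neg hc, hRz c hc r]
    rw [hπB, hπR] at h1
    exact ⟨hRred, h1⟩
  · rintro ⟨hRred, hchain⟩
    have hRall : Reduces B' R :=
      Relation.ReflTransGen.mono (fun _ _ hs => Saving.fstep_step hs) _ _ hchain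
    have hRz : ∀ q, q ∉ S → ∀ r, R r q = 0 := hBzeroB' R hRall hRred
    have h1 := Saving.sim_phi (B := bmat σ) (T := S)
      (fun A r c => if c ∈ S then A r c else A r c + bmat σ r c)
      (fun A r c hc => if_pos hc) (fun A r c hc => if_neg hc) hRz hchain
    have hφB' : (fun r c => if c ∈ S then B' r c else B' r c + bmat σ r c) = bmat σ := by
      funext r c
      by_cases hc : c ∈ S
      · rw [if_pos hc, hB'in r c hc]
      · rw [if_neg hc, hB'out r c hc, zero_add]
    have hrepc : ∀ c, c ∉ S → ∃ T : Finset (Fin n), (∀ b ∈ T, b < c ∧ b ∈ S) ∧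
        ∀ r, bmat σ r c = ∑ b ∈ T, R r b :=
      fun c hc => Saving.rep_final hin hspan hRall hRz hc
    have h2 : Relation.ReflTransGen (Saving.FStep R)
        ((fun A : Matrix (Fin n) (Fin n) (ZMod 2) =>
          fun r c => if c ∈ S then A r c else A r c + bmat σ r c) R) R := by
      apply Saving.phase2 hRz hrepc (Finset.univ.filter (fun c => c ∉ S))
      · intro c hc r
        simp only [Finset.mem_filter, Finset.mem_univ, true_and, not_not] at hc
        exact if_pos hc
      · intro c hc
        simp only [Finset.mem_filter, Finset.mem_univ, true_and] at hc
        refine ⟨hc, fun r => ?_⟩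
        rw [show ((fun A : Matrix (Fin n) (Fin n) (ZMod 2) =>
            fun r c => if c ∈ S then A r c else A r c + bmat σ r c) R) r c
          = if c ∈ S then R r c else R r c + bmat σ r c from rfl,
          if_neg hc, hRz c hc r, zero_add]
    rw [hφB'] at h1
    exact ⟨hRred, h1.trans h2⟩
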